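/- Let $0<p_1\le\cdots\le p_n<1$ and $k\in\{1,\dots,n\}$. Define $r^\ast$ as the largest $r\in\{1,\dots,n-k\}$ with $(1-p_r)\geq\frac{1}{n-k-r+2}\sum_{i=r}^{n}(1-p_i)$, or $0$ if none exists. Then for any events $A_1,\dots,A_n$ with $\mathbb{P}(A_i)=p_i$, $\mathbb{P}(\text{at least } k \text{ of the } A_i \text{ occur}) \geq \max\{1-\sum_{i=r^\ast+1}^{n}\frac{1-p_i}{n-k+1-r^\ast},\,0\}$. -/

import Mathlib

open MeasureTheory Finset
open scoped Classical
open scoped ENNReal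

theorem stmt_5 {Ω : Type*} [MeasurableSpace Ω] (μ : Measure Ω) [IsProbabilityMeasure μ]
    (n : ℕ) (p : ℕ → ℝ)
    (hp0 : ∀ i ∈ Finset.Icc 1 n, 0 < p i) (hp1 : ∀ i ∈ Finset.Icc 1 n, p i < 1)
    (hmono : ∀ i, 1 ≤ i → i < n → p i ≤ p (i + 1))
    (k : ℕ) (hk1 : 1 ≤ k) (hkn : k ≤ n)
    (rs : ℕ)
    (hrs : rs = 0 ∨ (1 ≤ rs ∧ rs ≤ n - k ∧
      1 - p rs ≥ (∑ i ∈ Finset.Icc rs n, (1 - p i)) / (n - k - rs + 2)))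
    (hrsmax : ∀ r, 1 ≤ r → r ≤ n - k →
      1 - p r ≥ (∑ i ∈ Finset.Icc r n, (1 - p i)) / (n - k - r + 2) → r ≤ rs)
    (A : ℕ → Set Ω) (hA : ∀ i ∈ Finset.Icc 1 n, MeasurableSet (A i))
    (hPA : ∀ i ∈ Finset.Icc 1 n, (μ (A i)).toReal = p i) :
    (μ {ω | k ≤ ((Finset.Icc 1 n).filter (fun i => ω ∈ A i)).card}).toReal ≥
      max (1 - (∑ i ∈ Finset.Icc (rs + 1) n, (1 - p i)) / (n - k + 1 - rs)) 0 := by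
  have hrsnk : rs ≤ n - k := by
    rcases hrs with h | h
    · omega
    · exact h.2.1
  set m : ℕ := n - k + 1 - rs with hm
  have hm1 : 1 ≤ m := by omega
  set S : Set Ω := {ω | k ≤ ((Finset.Icc 1 n).filter (fun i => ω ∈ A i)).card} with hSdef
  have hmeasS : MeasurableSet S := by
    have hcard : Measurable fun ω => ((Finset.Icc 1 n).filter (fun i => ω ∈ A i)).card := by
      simp only [Finset.card_filter]
      exact Finset.measurable_sum _ fun i hi =>
        Measurable.ite (hA i hi) measurable_const measurable_const
    exact hcard (by trivial : MeasurableSet (Set.Ici k))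
  have hSc : MeasurableSet Sᶜ := hmeasS.compl
  set t := Finset.Icc (rs + 1) n with ht
  have htsub : ∀ i ∈ t, i ∈ Finset.Icc 1 n := by
    intro i hi
    simp only [ht, Finset.mem_Icc] at hi ⊢
    omega
  -- pointwise counting inequality on Sᶜ
  have hcount : ∀ ω ∈ Sᶜ, (m : ℝ≥0∞) ≤ ∑ i ∈ t, Set.indicator (A i)ᶜ 1 ω := by
    intro ω hω
    have hωS : ((Finset.Icc 1 n).filter (fun i => ω ∈ A i)).card < k := by
      have : ¬ k ≤ ((Finset.Icc 1 n).filter (fun i => ω ∈ A i)).card := hω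
      omega
    have hsum : ∑ i ∈ t, Set.indicator (A i)ᶜ 1 ω
        = ((t.filter (fun i => ω ∉ A i)).card : ℝ≥0∞) := by
      rw [Finset.card_filter]
      push_cast
      refine Finset.sum_congr rfl fun i hi => ?_
      by_cases h : ω ∈ A i <;> simp [Set.indicator_apply, h]
    rw [hsum]
    have key : (Finset.Icc 1 n).filter (fun i => ω ∉ A i)
        ⊆ Finset.Icc 1 rs ∪ t.filter (fun i => ω ∉ A i) := by
      intro i hi
      simp only [Finset.mem_filter, Finset.mem_Icc, Finset.mem_union, ht] at hi ⊢
      obtain ⟨⟨h1, h2⟩, h3⟩ := hi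
      by_cases h : i ≤ rs
      · exact Or.inl ⟨h1, h⟩
      · exact Or.inr ⟨⟨by omega, h2⟩, h3⟩
    have h4 : ((Finset.Icc 1 n).filter (fun i => ω ∈ A i)).card
        + ((Finset.Icc 1 n).filter (fun i => ω ∉ A i)).card = n := by
      rw [Finset.card_filter_add_card_filter_not]
      simp [Nat.card_Icc]
    have h5 : ((Finset.Icc 1 n).filter (fun i => ω ∉ A i)).card
        ≤ rs + (t.filter (fun i => ω ∉ A i)).card := by
      calc ((Finset.Icc 1 n).filter (fun i => ω ∉ A i)).card
          ≤ (Finset.Icc 1 rs ∪ t.filter (fun i => ω ∉ A i)).card := Finset.card_le_card key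
        _ ≤ (Finset.Icc 1 rs).card + (t.filter (fun i => ω ∉ A i)).card :=
            Finset.card_union_le _ _
        _ = rs + (t.filter (fun i => ω ∉ A i)).card := by simp [Nat.card_Icc]
    have hle : m ≤ (t.filter (fun i => ω ∉ A i)).card := by omega
    exact_mod_cast Nat.cast_le.mpr hle
  -- integrate
  have hint : (m : ℝ≥0∞) * μ Sᶜ ≤ ∑ i ∈ t, μ (A i)ᶜ := by
    calc (m : ℝ≥0∞) * μ Sᶜ = ∫⁻ ω, Sᶜ.indicator (fun _ => (m : ℝ≥0∞)) ω ∂μ := by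
          rw [lintegral_indicator_const hSc]
      _ ≤ ∫⁻ ω, ∑ i ∈ t, Set.indicator (A i)ᶜ 1 ω ∂μ := by
          refine lintegral_mono fun ω => ?_
          by_cases hω : ω ∈ Sᶜ
          · rw [Set.indicator_of_mem hω]; exact hcount ω hω
          · rw [Set.indicator_of_notMem hω]; exact zero_le
      _ = ∑ i ∈ t, μ (A i)ᶜ := by
          rw [lintegral_finset_sum t fun i hi =>
            measurable_one.indicator ((hA i (htsub i hi)).compl)]
          exact Finset.sum_congr rfl fun i hi =>
            lintegral_indicator_one ((hA i (htsub i hi)).compl)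
  -- pass to real numbers
  have hqc : ∀ i ∈ t, (μ (A i)ᶜ).toReal = 1 - p i := by
    intro i hi
    rw [prob_compl_eq_one_sub (hA i (htsub i hi)),
      ENNReal.toReal_sub_of_le prob_le_one ENNReal.one_ne_top, ENNReal.toReal_one,
      hPA i (htsub i hi)]
  have hScr : (μ Sᶜ).toReal = 1 - (μ S).toReal := by
    rw [prob_compl_eq_one_sub hmeasS,
      ENNReal.toReal_sub_of_le prob_le_one ENNReal.one_ne_top, ENNReal.toReal_one]
  have hreal : (m : ℝ) * (1 - (μ S).toReal) ≤ ∑ i ∈ t, (1 - p i) := by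
    have h1 : ((m : ℝ≥0∞) * μ Sᶜ).toReal ≤ (∑ i ∈ t, μ (A i)ᶜ).toReal := by
      refine ENNReal.toReal_mono ?_ hint
      exact (ENNReal.sum_lt_top.mpr fun i _ => measure_lt_top μ _).ne
    rw [ENNReal.toReal_mul, ENNReal.toReal_natCast, hScr,
      ENNReal.toReal_sum (fun i _ => (measure_lt_top μ _).ne)] at h1
    calc (m : ℝ) * (1 - (μ S).toReal) ≤ ∑ i ∈ t, (μ (A i)ᶜ).toReal := h1
      _ = ∑ i ∈ t, (1 - p i) := Finset.sum_congr rfl hqc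
  have hmpos : (0 : ℝ) < m := by exact_mod_cast hm1
  have hcast : ((m : ℕ) : ℝ) = (n : ℝ) - (k : ℝ) + 1 - (rs : ℝ) := by
    rw [hm, Nat.cast_sub (by omega), Nat.cast_add, Nat.cast_sub hkn]
    norm_num
  refine le_trans (max_le ?_ ENNReal.toReal_nonneg) le_rfl
  have hdiv : 1 - (μ S).toReal ≤ (∑ i ∈ t, (1 - p i)) / (m : ℝ) := by
    rw [le_div_iff₀ hmpos]
    linarith [hreal]
  have : 1 - (∑ i ∈ t, (1 - p i)) / (m : ℝ) ≤ (μ S).toReal := by linarith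
  rw [hcast] at this
  exact this
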